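/- Let A and B be d×d real symmetric positive definite matrices and p ∈ (0, 1]. Then tr(B^p) − tr(A^p) ≤ p · tr(A^{p−1} (B − A)). -/

import Mathlib

open Matrix

/-- The Mahalanobis norm `‖x‖_B = √(xᵀ B x)`. -/
noncomputable def mnorm {d : ℕ} (B : Matrix (Fin d) (Fin d) ℝ) (x : Fin d → ℝ) : ℝ :=
  Real.sqrt (x ⬝ᵥ B *ᵥ x)

/-- Real matrix power of a symmetric matrix, via the spectral decomposition
(junk value `0` on non-Hermitian matrices). -/
noncomputable def mpow {d : ℕ} (A : Matrix (Fin d) (Fin d) ℝ) (q : ℝ) :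
    Matrix (Fin d) (Fin d) ℝ :=
  if hA : A.IsHermitian then
    (hA.eigenvectorUnitary : Matrix (Fin d) (Fin d) ℝ) *
      Matrix.diagonal (fun i => hA.eigenvalues i ^ q) *
      star (hA.eigenvectorUnitary : Matrix (Fin d) (Fin d) ℝ)
  else 0

lemma scalar_concave {x y p : ℝ} (hx : 0 < x) (hy : 0 < y) (hp0 : 0 < p) (hp1 : p ≤ 1) :
    y ^ p - x ^ p ≤ p * (x ^ (p - 1) * y - x ^ p) := by
  have hs : -1 ≤ y / x - 1 := by
    have : 0 < y / x := div_pos hy hx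
    linarith
  have hb := rpow_one_add_le_one_add_mul_self hs hp0.le hp1
  rw [show (1:ℝ) + (y / x - 1) = y/x by ring] at hb
  have h1 : (y / x) ^ p = y ^ p / x ^ p := Real.div_rpow hy.le hx.le p
  have h2 : x ^ (p - 1) = x ^ p / x := by
    rw [Real.rpow_sub hx, Real.rpow_one]
  rw [h1] at hb
  have hxp : 0 < x ^ p := Real.rpow_pos_of_pos hx p
  rw [div_le_iff₀ hxp] at hb
  rw [h2]
  have : x ^ p / x * y = x^p * (y/x) := by ring
  rw [this]
  nlinarith [Real.rpow_pos_of_pos hx p]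

/-- First-order concavity inequality for the trace functional `M ↦ tr(M^p)`. -/
theorem trace_rpow_concave {d : ℕ} (A B : Matrix (Fin d) (Fin d) ℝ)
    (hA : A.PosDef) (hB : B.PosDef) (p : ℝ) (hp0 : 0 < p) (hp1 : p ≤ 1) :
    (mpow B p).trace - (mpow A p).trace ≤ p * (mpow A (p - 1) * (B - A)).trace := by
  have hA1 := hA.1
  have hB1 := hB.1
  set U : Matrix (Fin d) (Fin d) ℝ := (hA1.eigenvectorUnitary : Matrix (Fin d) (Fin d) ℝ) with hU
  set V : Matrix (Fin d) (Fin d) ℝ := (hB1.eigenvectorUnitary : Matrix (Fin d) (Fin d) ℝ) with hV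
  set a : Fin d → ℝ := hA1.eigenvalues with ha
  set b : Fin d → ℝ := hB1.eigenvalues with hb
  have hapos : ∀ i, 0 < a i := hA.eigenvalues_pos
  have hbpos : ∀ i, 0 < b i := hB.eigenvalues_pos
  have hUU : star U * U = 1 := Matrix.UnitaryGroup.star_mul_self hA1.eigenvectorUnitary
  have hVV : star V * V = 1 := Matrix.UnitaryGroup.star_mul_self hB1.eigenvectorUnitary
  have hUU' : U * star U = 1 := (Matrix.mem_unitaryGroup_iff).mp hA1.eigenvectorUnitary.2
  set W : Matrix (Fin d) (Fin d) ℝ := star U * V with hW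
  have hstarW : star W = star V * U := by
    rw [hW, StarMul.star_mul, star_star]
  have hVV' : V * star V = 1 := (Matrix.mem_unitaryGroup_iff).mp hB1.eigenvectorUnitary.2
  have hWW : W * star W = 1 := by
    rw [hW, hstarW, mul_assoc, ← mul_assoc V, hVV', one_mul, hUU]
  have hWW' : star W * W = 1 := by
    rw [hW, hstarW, mul_assoc, ← mul_assoc U, hUU', one_mul, hVV]
  have hrow : ∀ i, ∑ j, W i j ^ 2 = 1 := by
    intro i
    have h := congrArg (fun M => M i i) hWW
    simp only [Matrix.mul_apply, Matrix.one_apply_eq, conjTranspose_apply, star_trivial] at h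
    simpa [pow_two] using h
  have hcol : ∀ j, ∑ i, W i j ^ 2 = 1 := by
    intro j
    have h := congrArg (fun M => M j j) hWW'
    simp only [Matrix.mul_apply, Matrix.one_apply_eq, conjTranspose_apply, star_trivial] at h
    simpa [pow_two, mul_comm] using h
  have htrace_pow : ∀ (M : Matrix (Fin d) (Fin d) ℝ) (hM : M.IsHermitian) (q : ℝ),
      (mpow M q).trace = ∑ i, hM.eigenvalues i ^ q := by
    intro M hM q
    rw [mpow, dif_pos hM, trace_mul_cycle,
      Matrix.UnitaryGroup.star_mul_self hM.eigenvectorUnitary, one_mul, trace_diagonal]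
  have hTB : (mpow B p).trace = ∑ j, b j ^ p := htrace_pow B hB1 p
  have hTA : (mpow A p).trace = ∑ i, a i ^ p := htrace_pow A hA1 p
  have hdiagb : Matrix.diagonal (RCLike.ofReal ∘ hB1.eigenvalues) = Matrix.diagonal b := rfl
  have hdiaga : star U * A * U = Matrix.diagonal a := by
    have h := hA1.conjStarAlgAut_star_eigenvectorUnitary
    rw [Unitary.conjStarAlgAut_star_apply] at h
    rw [show Matrix.diagonal (RCLike.ofReal ∘ hA1.eigenvalues) = Matrix.diagonal a from rfl] at h
    exact h
  have hUBU : star U * B * U = W * Matrix.diagonal b * star W := by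
    conv_lhs => rw [hB1.spectral_theorem, Unitary.conjStarAlgAut_apply]
    rw [hdiagb, hW, hstarW]
    noncomm_ring
  have hTmB : (mpow A (p-1) * B).trace
      = ∑ i, a i ^ (p-1) * ∑ j, W i j * b j * W i j := by
    rw [mpow, dif_pos hA1]
    rw [show (hA1.eigenvectorUnitary : Matrix (Fin d) (Fin d) ℝ)
          * Matrix.diagonal (fun i => hA1.eigenvalues i ^ (p-1))
          * star (hA1.eigenvectorUnitary : Matrix (Fin d) (Fin d) ℝ) * B
        = U * (Matrix.diagonal (fun i => a i ^ (p-1)) * (star U * B)) from by noncomm_ring]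
    rw [trace_mul_comm, show Matrix.diagonal (fun i => a i ^ (p-1)) * (star U * B) * U
        = Matrix.diagonal (fun i => a i ^ (p-1)) * (star U * B * U) from by noncomm_ring,
      hUBU]
    rw [show ((Matrix.diagonal fun i => a i ^ (p-1)) * (W * Matrix.diagonal b * star W)).trace
        = ∑ i, (a i ^ (p-1)) * ((W * Matrix.diagonal b * star W) i i) from by
      simp [Matrix.trace, Matrix.diag, Matrix.diagonal_mul]]
    refine Finset.sum_congr rfl fun i _ => ?_
    congr 1
    simp [Matrix.mul_apply, Matrix.diagonal_apply, Finset.sum_ite_eq, mul_ite, ite_mul,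
      mul_zero, zero_mul, conjTranspose_apply]
  have hTmA : (mpow A (p-1) * A).trace = ∑ i, a i ^ p := by
    rw [mpow, dif_pos hA1]
    rw [show (hA1.eigenvectorUnitary : Matrix (Fin d) (Fin d) ℝ)
          * Matrix.diagonal (fun i => hA1.eigenvalues i ^ (p-1))
          * star (hA1.eigenvectorUnitary : Matrix (Fin d) (Fin d) ℝ) * A
        = U * (Matrix.diagonal (fun i => a i ^ (p-1)) * (star U * A)) from by noncomm_ring]
    rw [trace_mul_comm, show Matrix.diagonal (fun i => a i ^ (p-1)) * (star U * A) * U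
        = Matrix.diagonal (fun i => a i ^ (p-1)) * (star U * A * U) from by noncomm_ring,
      hdiaga, diagonal_mul_diagonal, trace_diagonal]
    refine Finset.sum_congr rfl fun i _ => ?_
    rw [← Real.rpow_add_one (hapos i).ne', sub_add_cancel]
  have hTm : (mpow A (p-1) * (B - A)).trace
      = (∑ i, a i ^ (p-1) * ∑ j, W i j * b j * W i j) - ∑ i, a i ^ p := by
    rw [mul_sub, trace_sub, hTmB, hTmA]
  rw [hTB, hTA, hTm]
  -- rewrite sums with doubly stochastic weights
  have e1 : ∑ j, b j ^ p = ∑ i, ∑ j, W i j ^ 2 * b j ^ p := by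
    rw [Finset.sum_comm]
    refine Finset.sum_congr rfl fun j _ => ?_
    rw [← Finset.sum_mul, hcol j, one_mul]
  have e2 : ∑ i, a i ^ p = ∑ i, ∑ j, W i j ^ 2 * a i ^ p := by
    refine Finset.sum_congr rfl fun i _ => ?_
    rw [← Finset.sum_mul, hrow i, one_mul]
  have e3 : ∀ i, a i ^ (p-1) * ∑ j, W i j * b j * W i j
      = ∑ j, W i j ^ 2 * (a i ^ (p-1) * b j) := by
    intro i
    rw [Finset.mul_sum]
    refine Finset.sum_congr rfl fun j _ => by ring
  calc ∑ j, b j ^ p - ∑ i, a i ^ p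
      = ∑ i, ∑ j, (W i j ^ 2 * b j ^ p - W i j ^ 2 * a i ^ p) := by
        rw [e1, e2, ← Finset.sum_sub_distrib]
        refine Finset.sum_congr rfl fun i _ => (Finset.sum_sub_distrib _ _).symm
    _ ≤ ∑ i, ∑ j, W i j ^ 2 * (p * (a i ^ (p-1) * b j - a i ^ p)) := by
        refine Finset.sum_le_sum fun i _ => Finset.sum_le_sum fun j _ => ?_
        have := scalar_concave (hapos i) (hbpos j) hp0 hp1
        have hsq : (0:ℝ) ≤ W i j ^ 2 := sq_nonneg _
        nlinarith [mul_le_mul_of_nonneg_left this hsq]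
    _ = p * ((∑ i, a i ^ (p-1) * ∑ j, W i j * b j * W i j) - ∑ i, a i ^ p) := by
        have e3' : ∑ i, a i ^ (p-1) * ∑ j, W i j * b j * W i j
            = ∑ i, ∑ j, W i j ^ 2 * (a i ^ (p-1) * b j) :=
          Finset.sum_congr rfl fun i _ => e3 i
        rw [e3', e2, ← Finset.sum_sub_distrib, Finset.mul_sum]
        refine Finset.sum_congr rfl fun i _ => ?_
        rw [← Finset.sum_sub_distrib, Finset.mul_sum]
        exact Finset.sum_congr rfl fun j _ => by ring
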